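/- Let A be a nonzero m×n complex matrix with rank factorization PA = LU as above and B any m×p complex matrix. Then AA⁺B = P*L(L*L)⁻¹L*PB. -/

import Mathlib

open Matrix

lemma isUnit_of_rank_eq_card {r : ℕ} (M : Matrix (Fin r) (Fin r) ℂ) (h : M.rank = r) :
    IsUnit M := by
  rw [← Matrix.mulVec_surjective_iff_isUnit]
  have hr : LinearMap.range M.mulVecLin = ⊤ := by
    apply Submodule.eq_top_of_finrank_eq
    rw [← Matrix.rank, h]
    simp
  intro y
  obtain ⟨x, hx⟩ := LinearMap.range_eq_top.mp hr y
  exact ⟨x, hx⟩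

open scoped ComplexOrder in
lemma isUnit_LHL {m r : ℕ} (L : Matrix (Fin m) (Fin r) ℂ) (hL : L.rank = r) :
    IsUnit (Lᴴ * L) := by
  apply isUnit_of_rank_eq_card
  rw [Matrix.rank_conjTranspose_mul_self, hL]

open scoped ComplexOrder in
lemma isUnit_UUH {r n : ℕ} (U : Matrix (Fin r) (Fin n) ℂ) (hU : U.rank = r) :
    IsUnit (U * Uᴴ) := by
  apply isUnit_of_rank_eq_card
  rw [Matrix.rank_self_mul_conjTranspose, hU]

lemma permMatrix_conjTranspose {m : ℕ} (σ : Equiv.Perm (Fin m)) :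
    (Equiv.Perm.permMatrix ℂ σ)ᴴ = Equiv.Perm.permMatrix ℂ σ⁻¹ := by
  ext i j
  rw [conjTranspose_apply]
  simp only [Equiv.Perm.permMatrix, PEquiv.toMatrix_apply, Equiv.toPEquiv_apply, Option.mem_def, Option.some.injEq, Matrix.one_apply]
  by_cases h : σ j = i
  · have h' : σ⁻¹ i = j := by rw [← h]; exact Equiv.symm_apply_apply σ j
    simp [h, h']
  · have h' : σ⁻¹ i ≠ j := fun hh => h (by rw [← hh]; exact Equiv.apply_symm_apply σ i)
    simpa [h] using h'

theorem AAplusB_eq (m n r p : ℕ) (A : Matrix (Fin m) (Fin n) ℂ) (hA : A ≠ 0)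
    (σ : Equiv.Perm (Fin m)) (L : Matrix (Fin m) (Fin r) ℂ) (U : Matrix (Fin r) (Fin n) ℂ)
    (hL : L.rank = r) (hU : U.rank = r)
    (hfac : (Equiv.Perm.permMatrix ℂ σ) * A = L * U)
    (X : Matrix (Fin n) (Fin m) ℂ)
    (h1 : A * X * A = A) (h2 : X * A * X = X)
    (h3 : (A * X)ᴴ = A * X) (h4 : (X * A)ᴴ = X * A)
    (B : Matrix (Fin m) (Fin p) ℂ) :
    A * X * B = (Equiv.Perm.permMatrix ℂ σ)ᴴ * L * (Lᴴ * L)⁻¹ * Lᴴ *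
      (Equiv.Perm.permMatrix ℂ σ) * B := by
  set P := Equiv.Perm.permMatrix ℂ σ with hP
  -- P is unitary
  have hPP : Pᴴ * P = 1 := by
    rw [hP, permMatrix_conjTranspose]
    show (σ⁻¹).toPEquiv.toMatrix * σ.toPEquiv.toMatrix = 1
    rw [PEquiv.toMatrix_toPEquiv_mul]
    ext i j
    simp [Equiv.toPEquiv_apply, Matrix.one_apply, eq_comm]
  have hPPt : P * Pᴴ = 1 := by
    rw [hP, permMatrix_conjTranspose]
    show σ.toPEquiv.toMatrix * (σ⁻¹).toPEquiv.toMatrix = 1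
    rw [PEquiv.toMatrix_toPEquiv_mul]
    ext i j
    simp [Equiv.toPEquiv_apply, Matrix.one_apply, eq_comm]
  -- L^H L is invertible
  have hLL : IsUnit (Lᴴ * L) := isUnit_LHL L hL
  have hLLinv : (Lᴴ * L)⁻¹ * (Lᴴ * L) = 1 :=
    nonsing_inv_mul _ ((Matrix.isUnit_iff_isUnit_det _).mp hLL)
  -- U U^H is invertible
  have hUU : IsUnit (U * Uᴴ) := isUnit_UUH U hU
  have hUUinv : (U * Uᴴ) * (U * Uᴴ)⁻¹ = 1 :=
    mul_nonsing_inv _ ((Matrix.isUnit_iff_isUnit_det _).mp hUU)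
  -- A = Pᴴ L U
  have hAeq : A = Pᴴ * (L * U) := by
    rw [← hfac, ← Matrix.mul_assoc, hPP, Matrix.one_mul]
  set Q := Pᴴ * L * (Lᴴ * L)⁻¹ * Lᴴ * P with hQ
  -- Q * A = A
  have hQA : Q * A = A := by
    rw [hQ, hAeq]
    simp only [Matrix.mul_assoc]
    rw [← Matrix.mul_assoc P Pᴴ, hPPt, Matrix.one_mul, ← Matrix.mul_assoc Lᴴ L,
      ← Matrix.mul_assoc (Lᴴ * L)⁻¹, hLLinv, Matrix.one_mul]
  -- Q is Hermitian
  have hQH : Qᴴ = Q := by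
    have hinvH : ((Lᴴ * L)⁻¹)ᴴ = (Lᴴ * L)⁻¹ := by
      rw [Matrix.conjTranspose_nonsing_inv]
      congr 1
      rw [Matrix.conjTranspose_mul, Matrix.conjTranspose_conjTranspose]
    rw [hQ]
    simp only [Matrix.conjTranspose_mul, Matrix.conjTranspose_conjTranspose, hinvH]
    simp only [Matrix.mul_assoc]
  -- Q = A * (stuff), so (A X) Q = Q
  have hL_eq : Pᴴ * L = A * (Uᴴ * (U * Uᴴ)⁻¹) := by
    rw [hAeq]
    simp only [Matrix.mul_assoc]
    rw [← Matrix.mul_assoc U Uᴴ, hUUinv, Matrix.mul_one]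
  have hQform : Q = A * ((Uᴴ * (U * Uᴴ)⁻¹) * ((Lᴴ * L)⁻¹ * (Lᴴ * P))) := by
    rw [hQ, hL_eq]
    simp only [Matrix.mul_assoc]
  have hQrange : A * X * Q = Q := by
    rw [hQform, ← Matrix.mul_assoc, h1]
  -- A X Q = A X  (via Hermitian symmetry)
  have hAXQ : A * X * Q = A * X := by
    have hherm : (A * X * Q)ᴴ = A * X := by
      rw [Matrix.conjTranspose_mul, hQH, h3, ← Matrix.mul_assoc, hQA]
    calc A * X * Q = ((A * X * Q)ᴴ)ᴴ := by rw [Matrix.conjTranspose_conjTranspose]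
      _ = (A * X)ᴴ := by rw [hherm]
      _ = A * X := h3
  have key : A * X = Q := by rw [← hAXQ, hQrange]
  rw [key, hQ]
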